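/- (Gekeler's identity) For every h ≥ 1, Σ_{j=0}^{h-1} (-1)^j / (L_j D_{h-j}^{q^j}) = (-1)^{h+1}/L_h, and consequently Σ_{j=1}^{h} (-1)^j/(L_j D_{h-j}^{q^j}) = -1/D_h. -/

import Mathlib

noncomputable section

/-- `[i] = x^{q^i} - x`. -/
def brk {K : Type*} [CommRing K] (q : ℕ) (x : K) (i : ℕ) : K := x ^ q ^ i - x

/-- Carlitz factorial: `D_0 = 1`, `D_i = [i] D_{i-1}^q`. -/
def Dfac {K : Type*} [CommRing K] (q : ℕ) (x : K) : ℕ → K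
  | 0 => 1
  | i + 1 => brk q x (i + 1) * (Dfac q x i) ^ q

/-- `L_0 = 1`, `L_i = [i] L_{i-1}`. -/
def Lfac {K : Type*} [CommRing K] (q : ℕ) (x : K) : ℕ → K
  | 0 => 1
  | i + 1 => brk q x (i + 1) * Lfac q x i

namespace GekelerAux

variable {F : Type*} [Field F] [Fintype F]

lemma frob (q : ℕ) (hq : q = Fintype.card F) (m : ℕ) (a b : RatFunc F) :
    (a - b) ^ q ^ m = a ^ q ^ m - b ^ q ^ m := by
  haveI : CharP F (ringChar F) := ringChar.charP F
  obtain ⟨n, hp, hcard⟩ := FiniteField.card F (ringChar F)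
  haveI : Fact (Nat.Prime (ringChar F)) := ⟨hp⟩
  haveI : CharP (RatFunc F) (ringChar F) :=
    charP_of_injective_algebraMap (algebraMap F (RatFunc F)).injective _
  subst hq
  rw [hcard, ← pow_mul]
  exact sub_pow_char_pow a b _

lemma brk_split (q : ℕ) (hq : q = Fintype.card F) {j h : ℕ} (hjh : j ≤ h) :
    brk q (RatFunc.X : RatFunc F) h
      = brk q RatFunc.X j + (brk q RatFunc.X (h - j)) ^ q ^ j := by
  rw [brk, brk, brk, frob q hq, ← pow_mul, ← pow_add, Nat.sub_add_cancel hjh]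
  ring

lemma two_le_q (q : ℕ) (hq : q = Fintype.card F) : 2 ≤ q := by
  subst hq; exact Fintype.one_lt_card

lemma brk_ne_zero (q : ℕ) (hq : q = Fintype.card F) {i : ℕ} (hi : 1 ≤ i) :
    brk q (RatFunc.X : RatFunc F) i ≠ 0 := by
  have hq2 := two_le_q q hq
  have h2 : 2 ≤ q ^ i :=
    le_trans hq2 (le_trans (le_of_eq (pow_one q).symm)
      (Nat.pow_le_pow_right (by omega) hi))
  rw [brk]
  have : (RatFunc.X : RatFunc F) = algebraMap (Polynomial F) (RatFunc F) Polynomial.X :=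
    (RatFunc.algebraMap_X).symm
  rw [this, ← map_pow, ← map_sub]
  intro hcon
  have h0 : (Polynomial.X ^ q ^ i - Polynomial.X : Polynomial F) = 0 :=
    RatFunc.algebraMap_injective F (by simpa using hcon)
  have hco := congrArg (fun p => Polynomial.coeff p (q ^ i)) h0
  simp only [Polynomial.coeff_sub, Polynomial.coeff_X_pow, if_pos rfl,
    Polynomial.coeff_X, Polynomial.coeff_zero] at hco
  rw [if_neg (by omega : ¬ (1 : ℕ) = q ^ i), sub_zero] at hco
  exact one_ne_zero hco

lemma Dfac_ne_zero (q : ℕ) (hq : q = Fintype.card F) (i : ℕ) :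
    Dfac q (RatFunc.X : RatFunc F) i ≠ 0 := by
  induction i with
  | zero => simp [Dfac]
  | succ n ih =>
      rw [Dfac]
      exact mul_ne_zero (brk_ne_zero q hq (by omega)) (pow_ne_zero _ ih)

lemma Lfac_ne_zero (q : ℕ) (hq : q = Fintype.card F) (i : ℕ) :
    Lfac q (RatFunc.X : RatFunc F) i ≠ 0 := by
  induction i with
  | zero => simp [Lfac]
  | succ n ih =>
      rw [Lfac]
      exact mul_ne_zero (brk_ne_zero q hq (by omega)) ih

end GekelerAux

open GekelerAux in
/-- Gekeler's identity: for every `h ≥ 1`,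
`Σ_{j=0}^{h-1} (-1)^j / (L_j D_{h-j}^{q^j}) = (-1)^{h+1}/L_h`, and consequently
`Σ_{j=1}^{h} (-1)^j / (L_j D_{h-j}^{q^j}) = -1/D_h` (over `F_q(x)`). -/
theorem gekeler_identity {F : Type*} [Field F] [Fintype F]
    (q : ℕ) (hq : q = Fintype.card F) (h : ℕ) (hh : 1 ≤ h) :
    (∑ j ∈ Finset.range h,
        (-1 : RatFunc F) ^ j
          / (Lfac q (RatFunc.X : RatFunc F) j
              * (Dfac q (RatFunc.X : RatFunc F) (h - j)) ^ q ^ j)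
      = (-1 : RatFunc F) ^ (h + 1) / Lfac q (RatFunc.X : RatFunc F) h)
    ∧ ∑ j ∈ Finset.Icc 1 h,
        (-1 : RatFunc F) ^ j
          / (Lfac q (RatFunc.X : RatFunc F) j
              * (Dfac q (RatFunc.X : RatFunc F) (h - j)) ^ q ^ j)
        = -(1 / Dfac q (RatFunc.X : RatFunc F) h) := by
  set X : RatFunc F := RatFunc.X with hX
  set T : ℕ → RatFunc F := fun j =>
    (-1 : RatFunc F) ^ j / (Lfac q X j * (Dfac q X (h - j)) ^ q ^ j) with hT
  -- telescoping auxiliary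
  set f : ℕ → RatFunc F := fun j =>
    if 1 ≤ j ∧ j ≤ h then
      (-1 : RatFunc F) ^ j / (Lfac q X (j - 1) * (Dfac q X (h - j)) ^ q ^ j)
    else 0 with hf
  have hb : ∀ i, 1 ≤ i → brk q X i ≠ 0 := fun i hi => brk_ne_zero q hq hi
  have hD : ∀ i, Dfac q X i ≠ 0 := Dfac_ne_zero q hq
  have hL : ∀ i, Lfac q X i ≠ 0 := Lfac_ne_zero q hq
  have key : ∀ j ≤ h, brk q X h * T j = f j - f (j + 1) := by
    intro j hj
    rcases Nat.eq_zero_or_pos j with rfl | hj1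
    · -- j = 0
      have hf0 : f 0 = 0 := by simp only [hf]; rw [if_neg (by omega)]
      have hf1 : f 1 = (-1 : RatFunc F) ^ 1 / (Lfac q X (1 - 1) * (Dfac q X (h - 1)) ^ q ^ 1) := by
        simp only [hf]; rw [if_pos (by omega)]
      obtain ⟨k, hk⟩ : ∃ k, h = k + 1 := ⟨h - 1, by omega⟩
      subst hk
      rw [hf0, hf1]
      simp only [hT]
      rw [show k + 1 - 0 = k + 1 from rfl, show k + 1 - 1 = k from rfl,
        show (1 : ℕ) - 1 = 0 from rfl,
        show Dfac q X (k + 1) = brk q X (k + 1) * (Dfac q X k) ^ q from rfl,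
        show Lfac q X 0 = 1 from rfl]
      have hbk := hb (k + 1) (by omega)
      have hDk := hD k
      have hDkq : (Dfac q X k) ^ q ≠ 0 := pow_ne_zero _ hDk
      simp only [pow_zero, pow_one, one_mul, zero_sub, neg_div, neg_neg]
      field_simp
    · rcases eq_or_lt_of_le hj with heq | hjlt
      · -- j = h
        subst heq
        obtain ⟨k, hk⟩ : ∃ k, j = k + 1 := ⟨j - 1, by omega⟩
        subst hk
        have hfh : f (k + 1) = (-1 : RatFunc F) ^ (k + 1)
            / (Lfac q X (k + 1 - 1) * (Dfac q X (k + 1 - (k + 1))) ^ q ^ (k + 1)) := by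
          simp only [hf]; rw [if_pos (by omega)]
        have hfh1 : f (k + 1 + 1) = 0 := by simp only [hf]; rw [if_neg (by omega)]
        rw [hfh, hfh1, sub_zero]
        simp only [hT]
        rw [Nat.sub_self, show k + 1 - 1 = k from rfl,
          show Lfac q X (k + 1) = brk q X (k + 1) * Lfac q X k from rfl,
          show Dfac q X 0 = 1 from rfl]
        have hbk := hb (k + 1) (by omega)
        have hLk := hL k
        rw [one_pow, mul_one]
        field_simp
      · -- 1 ≤ j < h
        obtain ⟨k, hk⟩ : ∃ k, h - j = k + 1 := ⟨h - j - 1, by omega⟩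
        have hfj : f j
            = (-1 : RatFunc F) ^ j / (Lfac q X (j - 1) * (Dfac q X (h - j)) ^ q ^ j) := by
          simp only [hf]; rw [if_pos (by omega)]
        have hfj1 : f (j + 1) = (-1 : RatFunc F) ^ (j + 1)
            / (Lfac q X (j + 1 - 1) * (Dfac q X (h - (j + 1))) ^ q ^ (j + 1)) := by
          simp only [hf]; rw [if_pos (by omega)]
        have hsplit := brk_split q hq (le_of_lt hjlt)
        rw [hk] at hsplit
        have hLj : Lfac q X j = brk q X j * Lfac q X (j - 1) := by
          obtain ⟨m, hm⟩ : ∃ m, j = m + 1 := ⟨j - 1, by omega⟩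
          subst hm; rfl
        have hhj1 : h - (j + 1) = k := by omega
        have hpow : ∀ a b : RatFunc F, (a * b ^ q) ^ q ^ j = a ^ q ^ j * b ^ q ^ (j + 1) := by
          intro a b
          rw [mul_pow, ← pow_mul, ← pow_succ']
        rw [hfj, hfj1]
        simp only [hT]
        rw [hhj1, show j + 1 - 1 = j from rfl, hk,
          show Dfac q X (k + 1) = brk q X (k + 1) * (Dfac q X k) ^ q from rfl,
          hpow, hLj, hsplit]
        have hbj := hb j (by omega)
        have hbk := hb (k + 1) (by omega)
        have hL' := hL (j - 1)
        have hDk := hD k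
        have hBk : brk q X (k + 1) ^ q ^ j ≠ 0 := pow_ne_zero _ hbk
        have hDkp : Dfac q X k ^ q ^ (j + 1) ≠ 0 := pow_ne_zero _ hDk
        field_simp
        ring
  have sumkey : ∑ j ∈ Finset.range (h + 1), T j = 0 := by
    have hsum : brk q X h * ∑ j ∈ Finset.range (h + 1), T j = 0 := by
      rw [Finset.mul_sum]
      rw [Finset.sum_congr rfl (fun j hj => key j (by
        simpa [Nat.lt_succ_iff] using Finset.mem_range.mp hj))]
      rw [Finset.sum_range_sub' f]
      simp [hf]
    rcases mul_eq_zero.mp hsum with hc | hc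
    · exact absurd hc (hb h hh)
    · exact hc
  constructor
  · have h1 : ∑ j ∈ Finset.range h, T j = - T h := by
      have hs := Finset.sum_range_succ T h
      rw [hs] at sumkey
      exact eq_neg_of_add_eq_zero_left sumkey
    rw [h1]
    have hTh : T h = (-1 : RatFunc F) ^ h / Lfac q X h := by
      simp only [hT, Nat.sub_self]
      rw [show Dfac q X 0 = 1 from rfl, one_pow, mul_one]
    rw [hTh, pow_succ, ← neg_div]
    ring_nf
  · have hset : Finset.range (h + 1) = insert 0 (Finset.Icc 1 h) := by
      ext a
      simp [Nat.lt_succ_iff]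
      omega
    rw [hset, Finset.sum_insert (by simp)] at sumkey
    have h2 : ∑ j ∈ Finset.Icc 1 h, T j = - T 0 :=
      eq_neg_of_add_eq_zero_right sumkey
    rw [h2]
    have hT0 : T 0 = 1 / Dfac q X h := by
      simp only [hT, pow_zero, pow_one, Nat.sub_zero]
      rw [show Lfac q X 0 = 1 from rfl, one_mul]
    rw [hT0]
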